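/- As x → 1 from the right, the expression −(1/576)·φ(x)·( 1 + 1152·f₂(x) ), where f₂(x) = a₁(x) + 1/576, φ(x) = ζ(x)/(x²−1), a₁(x) = (1/1152)·[ (145 + 249x² − 9x⁴)/(x²−1)³ − 7x(x²−6)/((x²−1)^{3/2}·ζ(x)^{3/2}) − 455/(4·ζ(x)³) ], and ζ(x) = ( (3/4)·( x·√(x²−1) − arcosh x ) )^{2/3}, tends to (29/2400)·2^{−2/3}. -/

import Mathlib

open Real Filter

/-- The inverse hyperbolic cosine, `arcosh x = log (x + √(x² - 1))`. -/
noncomputable def arcosh (x : ℝ) : ℝ := Real.log (x + Real.sqrt (x ^ 2 - 1))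

/-- The variable `ζ(x) = ((3/4)(x√(x²-1) - _root_.arcosh x))^{2/3}` for `x ≥ 1`. -/
noncomputable def zeta (x : ℝ) : ℝ :=
  ((3 / 4) * (x * Real.sqrt (x ^ 2 - 1) - _root_.arcosh x)) ^ ((2 : ℝ) / 3)

/-- The coefficient function
`a₁(x) = (1/1152)·[(145+249x²-9x⁴)/(x²-1)³ - 7x(x²-6)/((x²-1)^{3/2}ζ^{3/2}) - 455/(4ζ³)]`. -/
noncomputable def a1 (x : ℝ) : ℝ :=
  (1 / 1152) *
    ((145 + 249 * x ^ 2 - 9 * x ^ 4) / (x ^ 2 - 1) ^ 3 -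
      7 * x * (x ^ 2 - 6) / ((x ^ 2 - 1) ^ ((3 : ℝ) / 2) * zeta x ^ ((3 : ℝ) / 2)) -
      455 / (4 * zeta x ^ 3))

/-- The function `φ(x) = ζ(x)/(x² - 1)`. -/
noncomputable def phi (x : ℝ) : ℝ := zeta x / (x ^ 2 - 1)

/-- The coefficient function `f₂ = a₁ + 1/576`. -/
noncomputable def f2 (x : ℝ) : ℝ := a1 x + 1 / 576


noncomputable def FL (L : List (ℤ × ℤ × ℤ × ℤ)) (t : ℝ) : ℝ :=
  (L.map (fun p => ((p.2.1 : ℝ) + (p.2.2.1 : ℝ) * t + (p.2.2.2 : ℝ) * t ^ 2) *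
    Real.exp ((p.1 : ℝ) * t))).sum

def dstep (L : List (ℤ × ℤ × ℤ × ℤ)) : List (ℤ × ℤ × ℤ × ℤ) :=
  L.map (fun p => (p.1, p.2.2.1 + p.1 * p.2.1, 2 * p.2.2.2 + p.1 * p.2.2.1, p.1 * p.2.2.2))

def val0 (L : List (ℤ × ℤ × ℤ × ℤ)) : ℤ := (L.map (fun p => p.2.1)).sum

lemma term_deriv (k c0 c1 c2 t : ℝ) :
    HasDerivAt (fun t => (c0 + c1 * t + c2 * t ^ 2) * Real.exp (k * t))
      (((c1 + k * c0) + (2 * c2 + k * c1) * t + (k * c2) * t ^ 2) * Real.exp (k * t)) t := by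
  have h1 : HasDerivAt (fun t : ℝ => c0 + c1 * t + c2 * t ^ 2) (c1 + 2 * c2 * t) t := by
    have h := ((hasDerivAt_const t c0).add ((hasDerivAt_id t).const_mul c1)).add
      ((hasDerivAt_pow 2 t).const_mul c2)
    simp only [id_eq] at h
    refine h.congr_deriv ?_
    norm_num; ring
  have h2 : HasDerivAt (fun t : ℝ => Real.exp (k * t)) (Real.exp (k * t) * k) t := by
    have h := ((hasDerivAt_id t).const_mul k).exp
    simp only [id_eq, mul_one] at h
    exact h
  refine (h1.mul h2).congr_deriv ?_
  ring

lemma FL_hasDerivAt (L : List (ℤ × ℤ × ℤ × ℤ)) (t : ℝ) :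
    HasDerivAt (FL L) (FL (dstep L) t) t := by
  induction L with
  | nil => simpa [FL, dstep, show FL [] = fun _ => (0:ℝ) from funext fun s => by simp [FL]] using hasDerivAt_const t (0:ℝ)
  | cons p L ih =>
    have h := (term_deriv (p.1 : ℝ) (p.2.1 : ℝ) (p.2.2.1 : ℝ) (p.2.2.2 : ℝ) t).add ih
    have e1 : FL (p :: L) = fun t =>
        (((p.2.1 : ℝ) + (p.2.2.1 : ℝ) * t + (p.2.2.2 : ℝ) * t ^ 2) * Real.exp ((p.1 : ℝ) * t))
          + FL L t := by
      funext s; simp [FL]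
    have e2 : FL (dstep (p :: L)) t =
        ((((p.2.2.1 : ℝ) + (p.1 : ℝ) * (p.2.1 : ℝ)) +
          (2 * (p.2.2.2 : ℝ) + (p.1 : ℝ) * (p.2.2.1 : ℝ)) * t +
          ((p.1 : ℝ) * (p.2.2.2 : ℝ)) * t ^ 2) * Real.exp ((p.1 : ℝ) * t)) + FL (dstep L) t := by
      simp only [FL, dstep, List.map_cons, List.sum_cons]; push_cast; ring
    rw [e1, e2]
    exact h

lemma FL_continuous (L : List (ℤ × ℤ × ℤ × ℤ)) : Continuous (FL L) :=
  continuous_iff_continuousAt.2 fun t => (FL_hasDerivAt L t).differentiableAt.continuousAt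

lemma FL_zero (L : List (ℤ × ℤ × ℤ × ℤ)) : FL L 0 = (val0 L : ℝ) := by
  induction L with
  | nil => simp [FL, val0]
  | cons p L ih =>
    have h1 : FL (p :: L) 0 = (p.2.1 : ℝ) + FL L 0 := by simp [FL]
    have h2 : val0 (p :: L) = p.2.1 + val0 L := by simp [val0]
    rw [h1, ih, h2]; push_cast; ring

lemma FL_tendsto_zero (L : List (ℤ × ℤ × ℤ × ℤ)) (h : val0 L = 0) :
    Tendsto (FL L) (nhdsWithin 0 (Set.Ioi 0)) (nhds 0) := by
  have := ((FL_continuous L).tendsto 0).mono_left (nhdsWithin_le_nhds (s := Set.Ioi (0:ℝ)))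
  rwa [FL_zero, h, Int.cast_zero] at this

theorem FL_key (n : ℕ) : ∀ (L : List (ℤ × ℤ × ℤ × ℤ)), (∀ m, m < n → val0 (dstep^[m] L) = 0) →
    Tendsto (fun t => FL L t / t ^ n) (nhdsWithin 0 (Set.Ioi 0))
      (nhds ((val0 (dstep^[n] L) : ℝ) / (n.factorial : ℝ))) := by
  induction n with
  | zero =>
    intro L _
    simp only [pow_zero, div_one, Function.iterate_zero, id_eq, Nat.factorial_zero,
      Nat.cast_one]
    have := ((FL_continuous L).tendsto 0).mono_left (nhdsWithin_le_nhds (s := Set.Ioi (0:ℝ)))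
    rwa [FL_zero] at this
  | succ n ih =>
    intro L h
    have ih' := ih (dstep L) (fun m hm => by
      have := h (m + 1) (by omega)
      rwa [Function.iterate_succ_apply] at this)
    apply HasDerivAt.lhopital_zero_nhdsGT (f' := fun t => FL (dstep L) t)
      (g' := fun t => ((n + 1 : ℕ) : ℝ) * t ^ n)
    · exact Eventually.of_forall fun t => FL_hasDerivAt L t
    · exact Eventually.of_forall fun t => hasDerivAt_pow (n + 1) t
    · filter_upwards [self_mem_nhdsWithin] with t ht
      have ht' : (0:ℝ) < t := ht
      positivity
    · exact FL_tendsto_zero L (h 0 (by omega))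
    · have := ((continuous_pow (n+1)).tendsto (0:ℝ)).mono_left
        (nhdsWithin_le_nhds (s := Set.Ioi (0:ℝ)))
      simpa using this
    · have heq : (fun t : ℝ => FL (dstep L) t / (((n + 1 : ℕ) : ℝ) * t ^ n)) =
          fun t => (FL (dstep L) t / t ^ n) / ((n + 1 : ℕ) : ℝ) := by
        funext t; rw [mul_comm, ← div_div]
      rw [heq, Function.iterate_succ_apply]
      have := ih'.div_const ((n + 1 : ℕ) : ℝ)
      convert this using 2
      rw [div_div, Nat.factorial_succ]
      push_cast
      ring

def Ls : List (ℤ × ℤ × ℤ × ℤ) := [(1, 1, 0, 0), (-1, -1, 0, 0)]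

def Lw : List (ℤ × ℤ × ℤ × ℤ) := [(2, 3, 0, 0), (-2, -3, 0, 0), (0, 0, -12, 0)]

def LN : List (ℤ × ℤ × ℤ × ℤ) :=
  [(-8, -165, 0, 0), (-6, 3376, -984, 0), (-4, 78468, 77184, -1296),
   (-2, -119856, 292104, 138240), (0, 76354, 0, 613152),
   (2, -119856, -292104, 138240), (4, 78468, -77184, -1296),
   (6, 3376, 984, 0), (8, -165, 0, 0)]

lemma tendsto_Ls : Tendsto (fun t => FL Ls t / t ^ 1) (nhdsWithin 0 (Set.Ioi 0)) (nhds 2) := by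
  have h := FL_key 1 Ls (by decide)
  have hv : val0 (dstep^[1] Ls) = 2 := by decide
  rw [hv] at h
  norm_num at h
  simpa using h

lemma tendsto_Lw : Tendsto (fun t => FL Lw t / t ^ 3) (nhdsWithin 0 (Set.Ioi 0)) (nhds 8) := by
  have h := FL_key 3 Lw (by decide)
  have hv : val0 (dstep^[3] Lw) = 48 := by decide
  rw [hv] at h
  norm_num [Nat.factorial] at h
  exact h

lemma tendsto_LN : Tendsto (fun t => FL LN t / t ^ 12) (nhdsWithin 0 (Set.Ioi 0))
    (nhds (-254976/25)) := by
  have h := FL_key 12 LN (by decide)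
  have hv : val0 (dstep^[12] LN) = -4885356478464 := by decide
  rw [hv] at h
  have he : ((-4885356478464 : ℤ) : ℝ) / ((12).factorial : ℝ) = -254976/25 := by
    norm_num [Nat.factorial]
  rwa [he] at h

lemma exp_facts (t : ℝ) (k : ℕ) : Real.exp ((k:ℝ) * t) = Real.exp t ^ k ∧
    Real.exp (-((k:ℝ)) * t) = (Real.exp t ^ k)⁻¹ := by
  constructor
  · rw [← Real.exp_nat_mul]
  · rw [show -((k:ℝ)) * t = -((k:ℝ) * t) by ring, Real.exp_neg, ← Real.exp_nat_mul]

lemma idS (t : ℝ) : FL Ls t = 2 * Real.sinh t := by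
  have h1 := (exp_facts t 1).1
  have h2 := (exp_facts t 1).2
  norm_num at h1 h2
  simp only [FL, Ls, List.map_cons, List.map_nil, List.sum_cons, List.sum_nil]
  push_cast
  rw [Real.sinh_eq]
  rw [show ((-1:ℝ)) * t = -(1:ℝ) * t by ring] at *
  norm_num at *
  rw [h2]
  have hE := Real.exp_pos t
  field_simp
  ring

lemma idw (t : ℝ) : FL Lw t = 12 * (Real.cosh t * Real.sinh t - t) := by
  have h2 := (exp_facts t 2).1
  have h2' := (exp_facts t 2).2
  norm_num at h2 h2'
  simp only [FL, Lw, List.map_cons, List.map_nil, List.sum_cons, List.sum_nil]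
  push_cast
  rw [Real.sinh_eq, Real.cosh_eq, Real.exp_neg]
  rw [show ((-2:ℝ)) * t = -(2:ℝ) * t by ring] at *
  norm_num at *
  rw [h2, h2']
  have hE := Real.exp_pos t
  field_simp
  ring

lemma idN (t : ℝ) : FL LN t =
    1024 * (4 * (145 + 249 * Real.cosh t ^ 2 - 9 * Real.cosh t ^ 4) *
        ((3/4) * (Real.cosh t * Real.sinh t - t)) ^ 2 -
      28 * Real.cosh t * (Real.cosh t ^ 2 - 6) * Real.sinh t ^ 3 *
        ((3/4) * (Real.cosh t * Real.sinh t - t)) -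
      455 * Real.sinh t ^ 6) := by
  have h2 := (exp_facts t 2).1
  have h2' := (exp_facts t 2).2
  have h4 := (exp_facts t 4).1
  have h4' := (exp_facts t 4).2
  have h6 := (exp_facts t 6).1
  have h6' := (exp_facts t 6).2
  have h8 := (exp_facts t 8).1
  have h8' := (exp_facts t 8).2
  norm_num at h2 h2' h4 h4' h6 h6' h8 h8'
  simp only [FL, LN, List.map_cons, List.map_nil, List.sum_cons, List.sum_nil]
  push_cast
  rw [Real.sinh_eq, Real.cosh_eq, Real.exp_neg]
  rw [show ((-2:ℝ)) * t = -(2:ℝ) * t by ring, show ((-4:ℝ)) * t = -(4:ℝ) * t by ring,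
    show ((-6:ℝ)) * t = -(6:ℝ) * t by ring, show ((-8:ℝ)) * t = -(8:ℝ) * t by ring] at *
  norm_num at *
  rw [h2, h2', h4, h4', h6, h6', h8, h8']
  have hE := Real.exp_pos t
  field_simp
  ring

noncomputable def gg (q s M : ℝ) : ℝ :=
  -(1 / 576) * (q / 16) ^ ((2:ℝ)/3) *
    (3 * (2 / s) ^ 2 + (M / 1024) * (2 / s) ^ 8 * (16 / q) ^ 2 / 4)

lemma glue (t : ℝ) (ht : 0 < t) :
    -(1 / 576) * phi (Real.cosh t) * (1 + 1152 * f2 (Real.cosh t)) =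
      gg (FL Lw t / t ^ 3) (FL Ls t / t) (FL LN t / t ^ 12) := by
  have hS : 0 < Real.sinh t := by rwa [Real.sinh_pos_iff]
  set S := Real.sinh t with hSdef
  set x := Real.cosh t with hxdef
  have hx1 : 1 ≤ x := Real.one_le_cosh t
  have hx2 : x ^ 2 - 1 = S ^ 2 := by rw [hxdef, hSdef, Real.cosh_sq]; ring
  have hsqrt : Real.sqrt (x ^ 2 - 1) = S := by rw [hx2, Real.sqrt_sq hS.le]
  have harc : _root_.arcosh x = t := by
    rw [_root_.arcosh, hsqrt, hxdef, hSdef, Real.cosh_add_sinh, Real.log_exp]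
  have hwpos : 0 < (3/4) * (x * S - t) := by
    have h1 : t < S := Real.self_lt_sinh_iff.2 ht
    have h2 : S ≤ x * S := le_mul_of_one_le_left hS.le hx1
    nlinarith
  set w : ℝ := (3/4) * (x * S - t) with hwdef
  have hzeta : zeta x = w ^ ((2:ℝ)/3) := by rw [zeta, harc, hsqrt]
  have hz32 : zeta x ^ ((3:ℝ)/2) = w := by
    rw [hzeta, ← Real.rpow_mul hwpos.le]
    norm_num
  have hz3 : zeta x ^ (3:ℕ) = w ^ 2 := by
    rw [hzeta, ← Real.rpow_natCast (w ^ ((2:ℝ)/3)) 3, ← Real.rpow_mul hwpos.le,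
      show (2:ℝ)/3 * (3:ℕ) = ((2:ℕ):ℝ) by norm_num, Real.rpow_natCast]
  have hx32 : (x ^ 2 - 1) ^ ((3:ℝ)/2) = S ^ 3 := by
    rw [hx2, ← Real.rpow_natCast S 2, ← Real.rpow_mul hS.le,
      show ((2:ℕ):ℝ) * ((3:ℝ)/2) = ((3:ℕ):ℝ) by norm_num, Real.rpow_natCast]
  have ht2 : (0:ℝ) < t ^ 2 := by positivity
  have hw23 : w ^ ((2:ℝ)/3) = (w / t ^ 3) ^ ((2:ℝ)/3) * t ^ 2 := by
    rw [Real.div_rpow hwpos.le (by positivity)]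
    rw [← Real.rpow_natCast t 3, ← Real.rpow_mul ht.le,
      show ((3:ℕ):ℝ) * ((2:ℝ)/3) = ((2:ℕ):ℝ) by norm_num, Real.rpow_natCast]
    rw [div_mul_cancel₀ _ (ne_of_gt ht2)]
  have hLw : FL Lw t = 16 * w := by rw [idw, hwdef]; ring
  rw [phi, f2, a1, hz32, hz3, hx32, hzeta, hx2, hw23, gg, idS, idN, hLw]
  rw [← hxdef, ← hSdef, ← hwdef]
  rw [show (16 * w / t ^ 3 / 16 : ℝ) = w / t ^ 3 by ring]
  set P := (w / t ^ 3) ^ ((2:ℝ)/3) with hPdef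
  have hS0 : S ≠ 0 := ne_of_gt hS
  have ht0 : t ≠ 0 := ne_of_gt ht
  have hw0 : w ≠ 0 := ne_of_gt hwpos
  field_simp
  ring

lemma value_eq : -(1/576:ℝ) * ((8:ℝ)/16) ^ ((2:ℝ)/3) *
    (3*((2:ℝ)/2)^2 + ((-254976/25:ℝ))/1024*((2:ℝ)/2)^8*((16:ℝ)/8)^2/4) =
    (29/2400) * (2:ℝ) ^ (-(2:ℝ)/3) := by
  have h : ((8:ℝ)/16) ^ ((2:ℝ)/3) = (2:ℝ) ^ (-(2:ℝ)/3) := by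
    rw [show (8:ℝ)/16 = 2⁻¹ by norm_num,
      Real.inv_rpow (by norm_num : (0:ℝ) ≤ 2), ← Real.rpow_neg (by norm_num : (0:ℝ) ≤ 2),
      neg_div]
  rw [h]; ring

lemma tendsto_gg : Tendsto (fun t => gg (FL Lw t / t ^ 3) (FL Ls t / t) (FL LN t / t ^ 12))
    (nhdsWithin 0 (Set.Ioi 0)) (nhds ((29/2400) * (2:ℝ) ^ (-(2:ℝ)/3))) := by
  have hs : Tendsto (fun t => FL Ls t / t) (nhdsWithin 0 (Set.Ioi 0)) (nhds 2) := by
    simpa using tendsto_Ls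
  have hrp : Tendsto (fun t => (FL Lw t / t ^ 3 / 16) ^ ((2:ℝ)/3)) (nhdsWithin 0 (Set.Ioi 0))
      (nhds (((8:ℝ)/16) ^ ((2:ℝ)/3))) :=
    (tendsto_Lw.div_const 16).rpow_const (Or.inr (by norm_num))
  have hs2 : Tendsto (fun t => 2 / (FL Ls t / t)) (nhdsWithin 0 (Set.Ioi 0))
      (nhds ((2:ℝ)/2)) := tendsto_const_nhds.div hs (by norm_num)
  have h16q : Tendsto (fun t => 16 / (FL Lw t / t ^ 3)) (nhdsWithin 0 (Set.Ioi 0))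
      (nhds ((16:ℝ)/8)) := tendsto_const_nhds.div tendsto_Lw (by norm_num)
  have hM : Tendsto (fun t => FL LN t / t ^ 12 / 1024) (nhdsWithin 0 (Set.Ioi 0))
      (nhds (((-254976/25:ℝ))/1024)) := tendsto_LN.div_const 1024
  have H := ((tendsto_const_nhds (x := -(1/576:ℝ)) (f := nhdsWithin (0:ℝ) (Set.Ioi 0))).mul
      hrp).mul
    (((tendsto_const_nhds (x := (3:ℝ))).mul (hs2.pow 2)).add
      (((hM.mul (hs2.pow 8)).mul (h16q.pow 2)).div_const 4))
  rw [value_eq] at H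
  simpa only [gg] using H

lemma cosh_arcosh {x : ℝ} (hx : 1 < x) : Real.cosh (_root_.arcosh x) = x := by
  have hs := Real.sqrt_nonneg (x ^ 2 - 1)
  have hx0 : 0 < x + Real.sqrt (x ^ 2 - 1) := by linarith
  have hsq : Real.sqrt (x ^ 2 - 1) ^ 2 = x ^ 2 - 1 := Real.sq_sqrt (by nlinarith)
  rw [_root_.arcosh, Real.cosh_eq, Real.exp_neg, Real.exp_log hx0]
  have hne : x + Real.sqrt (x ^ 2 - 1) ≠ 0 := ne_of_gt hx0
  field_simp
  nlinarith [hsq]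

lemma arcosh_tendsto : Tendsto _root_.arcosh (nhdsWithin 1 (Set.Ioi 1))
    (nhdsWithin 0 (Set.Ioi 0)) := by
  rw [tendsto_nhdsWithin_iff]
  constructor
  · have h1 : ContinuousAt (fun x : ℝ => x + Real.sqrt (x ^ 2 - 1)) 1 :=
      continuousAt_id.add (Real.continuous_sqrt.continuousAt.comp (by fun_prop))
    have h2 : ContinuousAt _root_.arcosh 1 := by
      apply ContinuousAt.log h1
      norm_num
    have h3 := h2.continuousWithinAt (s := Set.Ioi 1)
    have h4 : _root_.arcosh 1 = 0 := by
      rw [_root_.arcosh]; norm_num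
    rw [ContinuousWithinAt, h4] at h3
    exact h3
  · filter_upwards [self_mem_nhdsWithin] with x hx
    have hx' : (1:ℝ) < x := hx
    have hs := Real.sqrt_nonneg (x ^ 2 - 1)
    have : (1:ℝ) < x + Real.sqrt (x ^ 2 - 1) := by linarith
    exact Real.log_pos this

theorem tendsto_phi_f2_combination :
    Tendsto (fun x : ℝ => -(1 / 576) * phi x * (1 + 1152 * f2 x))
      (nhdsWithin 1 (Set.Ioi 1))
      (nhds ((29 / 2400) * (2 : ℝ) ^ (-(2 : ℝ) / 3))) := by
  have H := tendsto_gg.comp arcosh_tendsto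
  apply H.congr'
  filter_upwards [self_mem_nhdsWithin] with x hx
  have hx' : (1:ℝ) < x := hx
  have hpos : 0 < _root_.arcosh x := by
    have hs := Real.sqrt_nonneg (x ^ 2 - 1)
    exact Real.log_pos (by linarith)
  have hg := glue (_root_.arcosh x) hpos
  rw [cosh_arcosh hx'] at hg
  simpa [Function.comp] using hg.symm
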